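/- Let X be a uniformly locally bounded space. The group Autulb(X) with the topology of uniform biconvergence on bounded sets is Hausdorff if and only if X is Hausdorff. -/

import Mathlib

open Filter Set UniformConvergence

/-- A bornology on `X` (paper's convention): contains singletons, closed under
subsets, and under unions of two intersecting members. -/
structure IsBornology (X : Type*) (𝔅 : Set (Set X)) : Prop where
  singleton_mem : ∀ x : X, {x} ∈ 𝔅
  mem_of_subset : ∀ A ∈ 𝔅, ∀ B : Set X, B ⊆ A → B ∈ 𝔅
  union_mem : ∀ A ∈ 𝔅, ∀ B ∈ 𝔅, (A ∩ B).Nonempty → A ∪ B ∈ 𝔅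

/-- The image `E[A] = {y | ∃ x ∈ A, (x, y) ∈ E}` of a set under an entourage. -/
def entImage {X : Type*} (E : Set (X × X)) (A : Set X) : Set X :=
  {y | ∃ x ∈ A, (x, y) ∈ E}

/-- A uniformly locally bounded space: a uniform space with a bornology admitting
a bounded uniform entourage `E` (i.e. `E[B]` is bounded for every bounded `B`). -/
structure IsULB (X : Type*) [UniformSpace X] (𝔅 : Set (Set X)) : Prop where
  born : IsBornology X 𝔅
  bounded_entourage : ∃ E ∈ uniformity X, ∀ A ∈ 𝔅, entImage E A ∈ 𝔅

/-- An endomorphism of a uniformly locally bounded space: uniformly continuous on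
every bounded set, and modest (sends bounded sets to bounded sets). -/
def IsEndo {X : Type*} [UniformSpace X] (𝔅 : Set (Set X)) (f : X → X) : Prop :=
  (∀ A ∈ 𝔅, UniformContinuous fun x : A => f x) ∧ ∀ A ∈ 𝔅, f '' A ∈ 𝔅

theorem IsEndo.comp {X : Type*} [UniformSpace X] {𝔅 : Set (Set X)} {f g : X → X}
    (hf : IsEndo 𝔅 f) (hg : IsEndo 𝔅 g) : IsEndo 𝔅 (f ∘ g) := by
  refine ⟨fun A hA => ?_, fun A hA => ?_⟩
  · have h1 : UniformContinuous fun x : A =>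
        (⟨g x, Set.mem_image_of_mem g x.2⟩ : g '' A) :=
      (hg.1 A hA).subtype_mk _
    exact (hf.1 (g '' A) (hg.2 A hA)).comp h1
  · rw [Set.image_comp]
    exact hf.2 _ (hg.2 A hA)

theorem isEndo_id {X : Type*} [UniformSpace X] {𝔅 : Set (Set X)} : IsEndo 𝔅 (id : X → X) :=
  ⟨fun _ _ => uniformContinuous_subtype_val, fun A hA => by simpa using hA⟩

/-- The group of automorphisms of a uniformly locally bounded space: bijections `g`
such that `g` and `g⁻¹` are both modest and uniformly continuous on bounded sets. -/
def ulbAut (X : Type*) [UniformSpace X] (𝔅 : Set (Set X)) : Subgroup (Equiv.Perm X) where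
  carrier := {g | IsEndo 𝔅 ⇑g ∧ IsEndo 𝔅 ⇑g.symm}
  one_mem' := ⟨isEndo_id, isEndo_id⟩
  mul_mem' := fun {a b} ha hb => ⟨ha.1.comp hb.1, hb.2.comp ha.2⟩
  inv_mem' := fun {a} ha => ⟨ha.2, ha.1⟩

/-- The uniform structure of uniform biconvergence on bounded sets on `ulbAut X 𝔅`:
the one induced by `g ↦ (g, g⁻¹)` into `(X →ᵤ[𝔅] X) × (X →ᵤ[𝔅] X)`. -/
instance ulbAutUniformSpace (X : Type*) [UniformSpace X] (𝔅 : Set (Set X)) :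
    UniformSpace ↥(ulbAut X 𝔅) :=
  UniformSpace.comap
    (fun g => (UniformOnFun.ofFun 𝔅 ⇑g.1, UniformOnFun.ofFun 𝔅 ⇑g.1.symm))
    inferInstance

/-- `ulbAut X 𝔅` with the topology of uniform biconvergence on bounded sets is
Hausdorff if and only if `X` is Hausdorff. -/

private lemma aux_inseparable_ofFun {X : Type*} [UniformSpace X] (f g : X → X)
    (h : ∀ V ∈ uniformity X, ∀ a, (f a, g a) ∈ V) (𝔅 : Set (Set X)) :
    Inseparable (UniformOnFun.ofFun 𝔅 f) (UniformOnFun.ofFun 𝔅 g) := by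
  rw [inseparable_iff_ker_uniformity]
  have heq : uniformity (X →ᵤ[𝔅] X) = ⨅ (s : Set X) (_ : s ∈ 𝔅),
      @uniformity _ (UniformSpace.comap (UniformFun.ofFun ∘ s.domRestrict ∘ UniformOnFun.toFun 𝔅)
        (UniformFun.uniformSpace s X)) := by
    rw [UniformOnFun.uniformSpace]
    simp [iInf_uniformity]
  rw [heq]
  simp only [ker_iInf, mem_iInter]
  intro s hs
  rw [mem_ker]
  intro U hU
  rw [uniformity_comap, mem_comap] at hU
  obtain ⟨V, hV, hsub⟩ := hU
  apply hsub
  obtain ⟨W, hW, hWs⟩ := (UniformFun.hasBasis_uniformity s X).mem_iff.1 hV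
  apply hWs
  intro a
  exact h W hW a

theorem ulbAut_t2_iff {X : Type*} [UniformSpace X] {𝔅 : Set (Set X)}
    (h : IsULB X 𝔅) : T2Space ↥(ulbAut X 𝔅) ↔ T2Space X := by
  have hind : Topology.IsInducing
      (fun g : ↥(ulbAut X 𝔅) =>
        (UniformOnFun.ofFun 𝔅 ⇑g.1, UniformOnFun.ofFun 𝔅 ⇑g.1.symm)) :=
    ⟨UniformSpace.toTopologicalSpace_comap⟩
  constructor
  · intro hT2
    classical
    rw [R1Space.t2Space_iff_t0Space, t0Space_iff_uniformity]
    intro x y hxy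
    set σ : Equiv.Perm X := Equiv.swap x y with hσ
    have hkey : ∀ V ∈ uniformity X, ∀ a, (a, σ a) ∈ V := by
      intro V hV a
      rcases eq_or_ne a x with rfl | hax
      · simpa [hσ] using hxy V hV
      rcases eq_or_ne a y with rfl | hay
      · have : Prod.swap ⁻¹' V ∈ uniformity X := tendsto_swap_uniformity hV
        simpa [hσ] using hxy _ this
      · simp only [hσ, Equiv.swap_apply_of_ne_of_ne hax hay]
        exact refl_mem_uniformity hV
    have hkey' : ∀ V ∈ uniformity X, ∀ a, (σ a, a) ∈ V := by
      intro V hV a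
      have := hkey V hV (σ a)
      simpa [hσ, Equiv.swap_apply_self] using this
    have hUC : UniformContinuous ⇑σ := by
      intro V hV
      obtain ⟨W, hW, hWV⟩ := comp_mem_uniformity_sets hV
      obtain ⟨W', hW', hW'W⟩ := comp_mem_uniformity_sets hW
      rw [mem_map]
      filter_upwards [hW'] with p hp
      have h1 : (σ p.1, p.1) ∈ W' := hkey' W' hW' p.1
      have h2 : (σ p.1, p.2) ∈ W := hW'W (SetRel.prodMk_mem_comp h1 hp)
      have h3 : (p.2, σ p.2) ∈ W := mem_of_mem_of_subset (hkey W' hW' p.2) (fun q hq => hW'W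
        (SetRel.prodMk_mem_comp (refl_mem_uniformity hW') hq))
      exact hWV (SetRel.prodMk_mem_comp h2 h3)
    have hmod : ∀ A ∈ 𝔅, ⇑σ '' A ∈ 𝔅 := by
      intro A hA
      obtain ⟨E, hE, hEbd⟩ := h.bounded_entourage
      refine h.born.mem_of_subset _ (hEbd A hA) _ ?_
      rintro _ ⟨a, ha, rfl⟩
      exact ⟨a, ha, hkey E hE a⟩
    have hendo : IsEndo 𝔅 ⇑σ :=
      ⟨fun A _ => hUC.comp uniformContinuous_subtype_val, hmod⟩
    have hσmem : σ ∈ ulbAut X 𝔅 := by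
      refine ⟨hendo, ?_⟩
      rw [hσ, Equiv.symm_swap]
      exact hendo
    set σ' : ↥(ulbAut X 𝔅) := ⟨σ, hσmem⟩ with hσ'
    have hinsep : Inseparable σ' (1 : ↥(ulbAut X 𝔅)) := by
      rw [← hind.inseparable_iff]
      have h1 : Inseparable (UniformOnFun.ofFun 𝔅 ⇑σ) (UniformOnFun.ofFun 𝔅 ⇑(1 : Equiv.Perm X)) :=
        aux_inseparable_ofFun _ _ (fun V hV a => hkey' V hV a) 𝔅
      have h2 : Inseparable (UniformOnFun.ofFun 𝔅 ⇑σ.symm)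
          (UniformOnFun.ofFun 𝔅 ⇑(1 : Equiv.Perm X).symm) := by
        rw [hσ, Equiv.symm_swap, ← hσ]
        exact aux_inseparable_ofFun _ _ (fun V hV a => hkey' V hV a) 𝔅
      exact h1.prod h2
    have heq : σ' = 1 := hinsep.eq
    have hx : σ x = x :=
      congrArg (fun g : ↥(ulbAut X 𝔅) => (g : Equiv.Perm X) x) heq
    simpa [hσ, Equiv.swap_apply_left] using hx.symm
  · intro hT2X
    have hcover : ⋃₀ 𝔅 = univ :=
      eq_univ_of_forall fun x => ⟨{x}, h.born.singleton_mem x, rfl⟩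
    haveI : T2Space (X →ᵤ[𝔅] X) := UniformOnFun.t2Space_of_covering hcover
    have hinj : Function.Injective
        (fun g : ↥(ulbAut X 𝔅) =>
          (UniformOnFun.ofFun 𝔅 ⇑g.1, UniformOnFun.ofFun 𝔅 ⇑g.1.symm)) := by
      intro g₁ g₂ hgg
      have h1 : UniformOnFun.ofFun 𝔅 ⇑g₁.1 = UniformOnFun.ofFun 𝔅 ⇑g₂.1 :=
        congrArg Prod.fst hgg
      have h2 : ⇑g₁.1 = ⇑g₂.1 := (UniformOnFun.ofFun 𝔅).injective h1
      exact Subtype.ext (Equiv.coe_fn_injective h2)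
    exact (Topology.IsEmbedding.mk hind hinj).t2Space
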